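/- (Shannon–Whittaker sampling theorem.) Let W > 0 and let g : ℝ → ℂ be integrable with g(ξ) = 0 for all ξ outside [−W, W]. Define f(x) = ∫_ℝ g(ξ) e^{2πixξ} dξ, and suppose the sampled values are absolutely summable: ∑_{n∈ℤ} |f(n/(2W))| < ∞. Then for every x ∈ ℝ, f(x) = ∑_{n∈ℤ} f(n/(2W)) · sinc(2Wx − n), where the series converges absolutely. -/

import Mathlib

open MeasureTheory Real Filter Topology

/-- The normalized sinc function `sinc x = sin(πx)/(πx)`, with `sinc 0 = 1`. -/
noncomputable def sinc (x : ℝ) : ℝ := if x = 0 then 1 else Real.sin (π * x) / (π * x)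

lemma abs_sinc_le_one (x : ℝ) : |_root_.sinc x| ≤ 1 := by
  unfold _root_.sinc
  split_ifs with h
  · norm_num
  · rw [abs_div]
    apply div_le_one_of_le₀ Real.abs_sin_le_abs (abs_nonneg _)

lemma sinc_intCast (k : ℤ) : _root_.sinc (k : ℝ) = if k = 0 then 1 else 0 := by
  unfold _root_.sinc
  split_ifs with h1 h2 h2
  · rfl
  · exact absurd (by exact_mod_cast h1) h2
  · exact absurd (by exact_mod_cast h2) h1
  · rw [mul_comm, Real.sin_int_mul_pi, zero_div]

lemma norm_exp_I_real (r : ℝ) {z : ℂ} (hz : z = (r : ℂ) * Complex.I) :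
    ‖Complex.exp z‖ = 1 := by
  rw [hz, Complex.norm_exp_ofReal_mul_I]

lemma key_integral {W : ℝ} (hW : 0 < W) (a : ℝ) :
    (∫ ξ in Set.Ioo (-W) W, Complex.exp (2 * (π:ℂ) * Complex.I * a * ξ)) =
      2 * W * (_root_.sinc (2 * W * a) : ℝ) := by
  rw [← MeasureTheory.integral_Ioc_eq_integral_Ioo,
    ← intervalIntegral.integral_of_le (by linarith : -W ≤ W)]
  rcases eq_or_ne a 0 with rfl | ha
  · simp [_root_.sinc]; push_cast; ring
  · have hc : (2 * (π:ℂ) * Complex.I * a) ≠ 0 := by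
      simp [Real.pi_ne_zero, Complex.I_ne_zero, ha, Complex.ofReal_ne_zero]
    have hWa : 2 * W * a ≠ 0 := mul_ne_zero (by positivity) ha
    have this1 := integral_exp_mul_complex (a := -W) (b := W) hc
    rw [show (fun x : ℝ => Complex.exp (2 * (π:ℂ) * Complex.I * ↑a * ↑x)) =
      (fun x : ℝ => Complex.exp (2 * (π:ℂ) * Complex.I * ↑a * ↑x)) from rfl] at this1
    rw [this1,
      show 2 * (π:ℂ) * Complex.I * ↑a * ↑W = ((2*π*a*W : ℝ) : ℂ) * Complex.I by push_cast; ring,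
      show 2 * (π:ℂ) * Complex.I * ↑a * ↑(-W : ℝ) = ((-(2*π*a*W) : ℝ) : ℂ) * Complex.I by
        push_cast; ring,
      Complex.exp_mul_I, Complex.exp_mul_I, _root_.sinc, if_neg hWa]
    push_cast
    rw [Complex.cos_neg, Complex.sin_neg]
    have hπ : (π:ℂ) ≠ 0 := by exact_mod_cast Real.pi_ne_zero
    have haC : (a:ℂ) ≠ 0 := Complex.ofReal_ne_zero.mpr ha
    have hsin : Complex.sin (2*(π:ℂ)*a*W) = Complex.sin ((π:ℂ)*(2*W*a)) := by ring_nf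
    rw [hsin]
    have : (Complex.cos ((π:ℂ)*(2*W*a)) + Complex.sin ((π:ℂ)*(2*W*a)) * Complex.I -
        (Complex.cos ((π:ℂ)*(2*W*a)) - Complex.sin ((π:ℂ)*(2*W*a)) * Complex.I)) =
        2 * Complex.sin ((π:ℂ)*(2*W*a)) * Complex.I := by ring
    have hD : ((π:ℂ) * (2*W*a)) ≠ 0 := by
      push_cast
      exact mul_ne_zero hπ (by exact_mod_cast hWa)
    rw [← mul_div_assoc, div_eq_div_iff hc (by push_cast at hD ⊢; exact hD)]
    ring

-- key vanishing lemma: an integrable function on [-W,W] all of whose Fourier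
-- coefficients vanish integrates to zero against every character e^{2πixξ}.
lemma key_vanish {W : ℝ} (hW : 0 < W) {φ : ℝ → ℂ}
    (hφ : IntegrableOn φ (Set.Ioo (-W) W))
    (h0 : ∀ n : ℤ,
      (∫ ξ in Set.Ioo (-W) W, φ ξ * fourier n (ξ : AddCircle (2*W))) = 0)
    (x : ℝ) :
    (∫ ξ in Set.Ioo (-W) W, φ ξ * Complex.exp (2 * (π:ℂ) * Complex.I * x * ξ)) = 0 := by
  haveI hT : Fact (0 < 2*W) := ⟨by linarith⟩
  have hmk : Continuous (fun ξ : ℝ => (ξ : AddCircle (2*W))) := continuous_quotient_mk'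
  have hint : ∀ Ψ : C(AddCircle (2*W), ℂ),
      Integrable (fun ξ => φ ξ * Ψ (ξ : AddCircle (2*W)))
        (volume.restrict (Set.Ioo (-W) W)) := by
    intro Ψ
    have h1 : Integrable (fun ξ : ℝ => Ψ (ξ : AddCircle (2*W)) * φ ξ)
        (volume.restrict (Set.Ioo (-W) W)) :=
      Integrable.bdd_mul hφ ((Ψ.continuous.comp hmk).aestronglyMeasurable)
        (ae_of_all _ fun ξ => Ψ.norm_coe_le_norm _)
    simpa [mul_comm] using h1
  have hcont : ∀ Ψ : C(AddCircle (2*W), ℂ),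
      (∫ ξ in Set.Ioo (-W) W, φ ξ * Ψ (ξ : AddCircle (2*W))) = 0 := by
    intro Ψ
    have hspan : ∀ P ∈ Submodule.span ℂ (Set.range (@fourier (2*W))),
        (∫ ξ in Set.Ioo (-W) W, φ ξ * P (ξ : AddCircle (2*W))) = 0 := by
      intro P hP
      induction hP using Submodule.span_induction with
      | mem P hP => obtain ⟨n, rfl⟩ := hP; exact h0 n
      | zero => simp
      | add P Q hPm hQm hP hQ =>
        have : (fun ξ => φ ξ * (P + Q) (ξ : AddCircle (2*W)))
            = fun ξ => φ ξ * P (ξ : AddCircle (2*W)) + φ ξ * Q (ξ : AddCircle (2*W)) := by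
          funext ξ; simp [mul_add]
        rw [this, integral_add (hint P) (hint Q), hP, hQ, add_zero]
      | smul c P hPm hP =>
        have : (fun ξ => φ ξ * (c • P) (ξ : AddCircle (2*W)))
            = fun ξ => c • (φ ξ * P (ξ : AddCircle (2*W))) := by
          funext ξ; simp [smul_eq_mul]; ring
        rw [this, integral_smul, hP, smul_zero]
    -- density
    have hΨ : Ψ ∈ closure ((Submodule.span ℂ (Set.range (@fourier (2*W)))) : Set _) := by
      have : Ψ ∈ (Submodule.span ℂ (Set.range (@fourier (2*W)))).topologicalClosure := by
        rw [span_fourier_closure_eq_top]; trivial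
      exact this
    set C := ∫ ξ in Set.Ioo (-W) W, ‖φ ξ‖ with hC
    have hC0 : 0 ≤ C := integral_nonneg fun ξ => norm_nonneg _
    have key : ∀ ε : ℝ, 0 < ε →
        ‖∫ ξ in Set.Ioo (-W) W, φ ξ * Ψ (ξ : AddCircle (2*W))‖ ≤ ε * C := by
      intro ε hε
      obtain ⟨P, hPmem, hPdist⟩ := Metric.mem_closure_iff.mp hΨ ε hε
      have hPz := hspan P hPmem
      have hsub : (∫ ξ in Set.Ioo (-W) W, φ ξ * Ψ (ξ : AddCircle (2*W)))
          = ∫ ξ in Set.Ioo (-W) W,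
              (φ ξ * Ψ (ξ : AddCircle (2*W)) - φ ξ * P (ξ : AddCircle (2*W))) := by
        rw [integral_sub (hint Ψ) (hint P), hPz, sub_zero]
      rw [hsub]
      have hb : ∀ ξ : ℝ, ‖φ ξ * Ψ (ξ : AddCircle (2*W)) - φ ξ * P (ξ : AddCircle (2*W))‖
          ≤ ‖φ ξ‖ * ε := by
        intro ξ
        rw [← mul_sub, norm_mul]
        refine mul_le_mul_of_nonneg_left ?_ (norm_nonneg _)
        calc ‖Ψ (ξ : AddCircle (2*W)) - P (ξ : AddCircle (2*W))‖
            = dist (Ψ (ξ : AddCircle (2*W))) (P (ξ : AddCircle (2*W))) := by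
              rw [dist_eq_norm]
          _ ≤ dist Ψ P := ContinuousMap.dist_apply_le_dist _
          _ ≤ ε := hPdist.le
      calc ‖∫ ξ in Set.Ioo (-W) W,
            (φ ξ * Ψ (ξ : AddCircle (2*W)) - φ ξ * P (ξ : AddCircle (2*W)))‖
          ≤ ∫ ξ in Set.Ioo (-W) W, ‖φ ξ‖ * ε :=
            norm_integral_le_of_norm_le (hφ.norm.mul_const ε) (ae_of_all _ hb)
        _ = ε * C := by rw [integral_mul_const, mul_comm]
    have : ‖∫ ξ in Set.Ioo (-W) W, φ ξ * Ψ (ξ : AddCircle (2*W))‖ ≤ 0 := by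
      refine le_of_forall_pos_le_add fun δ hδ => ?_
      rcases eq_or_lt_of_le hC0 with h | h
      · have := key δ hδ
        rw [← h, mul_zero] at this
        linarith
      · have := key (δ / C) (by positivity)
        rw [div_mul_cancel₀ _ h.ne'] at this
        linarith
    exact norm_le_zero_iff.mp this
  -- part (b): approximate the character by continuous circle functions
  set E : ℝ → ℂ := fun ξ => Complex.exp (2 * (π:ℂ) * Complex.I * x * ξ) with hE
  have hEnorm : ∀ ξ : ℝ, ‖E ξ‖ = 1 := fun ξ => norm_exp_I_real (2*π*x*ξ) (by push_cast; ring)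
  set θ : ℕ → ℝ → ℝ := fun k ξ => max 0 (min 1 ((k:ℝ) * (W - |ξ|))) with hθ
  have θcont : ∀ k, Continuous (θ k) := fun k =>
    continuous_const.max (continuous_const.min (continuous_const.mul
      (continuous_const.sub continuous_abs)))
  have θ1 : ∀ k ξ, |θ k ξ| ≤ 1 := by
    intro k ξ
    rw [abs_le]
    refine ⟨le_trans (by norm_num) (le_max_left _ _), max_le (by norm_num) (min_le_left _ _)⟩
  have θW : ∀ k, θ k W = 0 ∧ θ k (-W) = 0 := by
    intro k
    constructor <;> simp [hθ, abs_of_pos hW]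
  set u : ℕ → ℝ → ℂ := fun k ξ => (θ k ξ : ℂ) * E ξ with hu
  have ucont : ∀ k, Continuous (u k) := fun k =>
    (Complex.continuous_ofReal.comp (θcont k)).mul (by fun_prop)
  have hu_endpoint : ∀ k, u k (-W) = u k (-W + 2*W) := by
    intro k
    rw [show -W + 2*W = W by ring]
    simp [hu, (θW k).1, (θW k).2]
  have hunorm : ∀ k ξ, ‖u k ξ‖ ≤ 1 := by
    intro k ξ
    rw [hu]
    simp only [norm_mul, Complex.norm_real, Real.norm_eq_abs, hEnorm, mul_one]
    exact θ1 k ξ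
  set Ψs : ℕ → C(AddCircle (2*W), ℂ) := fun k =>
    ⟨AddCircle.liftIco (2*W) (-W) (u k),
      AddCircle.liftIco_continuous (hu_endpoint k) (ucont k).continuousOn⟩ with hΨdef
  have hΨeq : ∀ k, ∀ ξ ∈ Set.Ioo (-W) W, Ψs k (ξ : AddCircle (2*W)) = u k ξ := by
    intro k ξ hξ
    have hmem : ξ ∈ Set.Ico (-W) (-W + 2*W) := ⟨hξ.1.le, by linarith [hξ.2]⟩
    show AddCircle.liftIco (2*W) (-W) (u k) (ξ : AddCircle (2*W)) = u k ξ
    exact AddCircle.liftIco_coe_apply hmem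
  have hzero : ∀ k, (∫ ξ in Set.Ioo (-W) W, φ ξ * u k ξ) = 0 := by
    intro k
    rw [← hcont (Ψs k)]
    exact setIntegral_congr_fun measurableSet_Ioo fun ξ hξ => by
      show φ ξ * u k ξ = φ ξ * Ψs k (ξ : AddCircle (2*W))
      rw [hΨeq k ξ hξ]
  have hDCT : Filter.Tendsto (fun k => ∫ ξ in Set.Ioo (-W) W, φ ξ * u k ξ)
      Filter.atTop (𝓝 (∫ ξ in Set.Ioo (-W) W, φ ξ * E ξ)) := by
    refine tendsto_integral_of_dominated_convergence (fun ξ => ‖φ ξ‖)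
      (fun k => hφ.aestronglyMeasurable.mul (ucont k).aestronglyMeasurable)
      hφ.norm ?_ ?_
    · intro k
      refine ae_of_all _ fun ξ => ?_
      rw [norm_mul]
      calc ‖φ ξ‖ * ‖u k ξ‖ ≤ ‖φ ξ‖ * 1 :=
            mul_le_mul_of_nonneg_left (hunorm k ξ) (norm_nonneg _)
        _ = ‖φ ξ‖ := mul_one _
    · filter_upwards [ae_restrict_mem measurableSet_Ioo] with ξ hξ
      have hpos : 0 < W - |ξ| := by
        have := abs_lt.mpr ⟨by linarith [hξ.1], hξ.2⟩
        linarith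
      obtain ⟨K, hK⟩ := exists_nat_ge (1 / (W - |ξ|))
      have hconst : ∀ k ≥ K, φ ξ * u k ξ = φ ξ * E ξ := by
        intro k hk
        have h1 : (1:ℝ) ≤ (k:ℝ) * (W - |ξ|) := by
          rw [ge_iff_le] at hk
          have : (1:ℝ)/(W - |ξ|) ≤ (k:ℝ) := le_trans hK (by exact_mod_cast hk)
          rw [div_le_iff₀ hpos] at this
          linarith
        have hθ1 : θ k ξ = 1 := by
          show max 0 (min 1 ((k:ℝ) * (W - |ξ|))) = 1
          rw [min_eq_left h1, max_eq_right zero_le_one]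
        show φ ξ * ((θ k ξ : ℂ) * E ξ) = φ ξ * E ξ
        rw [hθ1]
        simp
      exact Filter.Tendsto.congr'
        (Filter.eventually_atTop.mpr ⟨K, fun k hk => (hconst k hk).symm⟩) tendsto_const_nhds
  have hconstseq : (fun k => ∫ ξ in Set.Ioo (-W) W, φ ξ * u k ξ) = fun _ => 0 := funext hzero
  rw [hconstseq] at hDCT
  exact (tendsto_nhds_unique tendsto_const_nhds hDCT).symm

/-- Shannon–Whittaker sampling theorem: if `g` is integrable and supported in `[−W, W]`,
`f` is its inverse Fourier transform, and the samples `f(n/(2W))` are absolutely summable,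
then `f(x) = ∑_{n∈ℤ} f(n/(2W)) sinc(2Wx − n)` for every `x`, with absolute convergence. -/
theorem shannon_whittaker_sampling (W : ℝ) (hW : 0 < W) (g : ℝ → ℂ)
    (hg : Integrable g) (hsupp : ∀ ξ : ℝ, ξ ∉ Set.Icc (-W) W → g ξ = 0)
    (f : ℝ → ℂ)
    (hf : ∀ x : ℝ, f x = ∫ ξ : ℝ, g ξ * Complex.exp (2 * (π : ℂ) * Complex.I * x * ξ))
    (hsum : Summable fun n : ℤ => ‖f (n / (2 * W))‖) :
    ∀ x : ℝ,
      (Summable fun n : ℤ => ‖f (n / (2 * W)) * (_root_.sinc (2 * W * x - n) : ℂ)‖) ∧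
      HasSum (fun n : ℤ => f (n / (2 * W)) * (_root_.sinc (2 * W * x - n) : ℂ)) (f x) := by
  haveI hT : Fact (0 < 2*W) := ⟨by linarith⟩
  have hW2 : (2*W : ℝ) ≠ 0 := by positivity
  have h2WC : ((2:ℂ) * (W:ℂ)) ≠ 0 := by
    have : ((W:ℝ) : ℂ) ≠ 0 := Complex.ofReal_ne_zero.mpr hW.ne'
    simpa using this
  set a : ℤ → ℂ := fun n => f (n / (2*W)) with ha
  set c : ℤ → ℂ := fun n => a n / ((2*W : ℝ) : ℂ) with hc
  have hcnorm : ∀ n, ‖c n‖ = ‖a n‖ / (2*W) := by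
    intro n
    rw [hc]
    simp only [norm_div, Complex.norm_real, Real.norm_eq_abs,
      abs_of_pos (by positivity : (0:ℝ) < 2*W)]
  have hcs : Summable fun n : ℤ => ‖c n‖ := by
    refine (hsum.div_const (2*W)).congr fun n => ?_
    rw [hcnorm]
  -- the Fourier series of g
  set t : ℤ → ℝ → ℂ := fun n ξ =>
    c n * Complex.exp (-(2 * (π:ℂ) * Complex.I * n * ξ / ((2*W : ℝ) : ℂ))) with ht
  have htnorm : ∀ n ξ, ‖t n ξ‖ = ‖c n‖ := by
    intro n ξ
    rw [ht]
    simp only [norm_mul]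
    rw [norm_exp_I_real (-(2*π*n*ξ/(2*W))) (by push_cast; ring), mul_one]
  have htcont : ∀ n, Continuous (t n) := fun n => by fun_prop
  set s : ℝ → ℂ := fun ξ => ∑' n : ℤ, t n ξ with hs
  have hscont : Continuous s := continuous_tsum htcont hcs (fun n ξ => (htnorm n ξ).le)
  -- f as an integral over Ioo
  have hfIoo : ∀ x : ℝ, f x
      = ∫ ξ in Set.Ioo (-W) W, g ξ * Complex.exp (2 * (π:ℂ) * Complex.I * x * ξ) := by
    intro x
    rw [hf x, ← setIntegral_eq_integral_of_forall_compl_eq_zero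
        (s := Set.Icc (-W) W) (fun ξ hξ => by rw [hsupp ξ hξ, zero_mul]),
      integral_Icc_eq_integral_Ioc, integral_Ioc_eq_integral_Ioo]
  -- the interchange of sum and integral
  have swap : ∀ x : ℝ, HasSum (fun n : ℤ => a n * (_root_.sinc (2*W*x - n) : ℂ))
      (∫ ξ in Set.Ioo (-W) W, s ξ * Complex.exp (2 * (π:ℂ) * Complex.I * x * ξ)) := by
    intro x
    set F : ℤ → ℝ → ℂ := fun n ξ =>
      t n ξ * Complex.exp (2 * (π:ℂ) * Complex.I * x * ξ) with hF
    have hFcont : ∀ n, Continuous (F n) := fun n => (htcont n).mul (by fun_prop)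
    have hFnorm : ∀ n ξ, ‖F n ξ‖ = ‖c n‖ := by
      intro n ξ
      rw [hF]
      simp only [norm_mul]
      rw [htnorm, norm_exp_I_real (2*π*x*ξ) (by push_cast; ring), mul_one]
    have hFint : ∀ n, Integrable (F n) (volume.restrict (Set.Ioo (-W) W)) := fun n =>
      ((hFcont n).integrableOn_Icc).mono_set Set.Ioo_subset_Icc_self
    have hFnormint : ∀ n, (∫ ξ in Set.Ioo (-W) W, ‖F n ξ‖) = ‖c n‖ * (2*W) := by
      intro n
      rw [setIntegral_congr_fun measurableSet_Ioo (fun ξ _ => hFnorm n ξ), setIntegral_const,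
        Real.volume_real_Ioo_of_le (by linarith : -W ≤ W), smul_eq_mul]
      ring
    have hsum2 : Summable fun n : ℤ => ∫ ξ in Set.Ioo (-W) W, ‖F n ξ‖ := by
      refine (hcs.mul_right (2*W)).congr fun n => ?_
      rw [hFnormint]
    have H := hasSum_integral_of_summable_integral_norm hFint hsum2
    have htsum : ∀ ξ : ℝ, (∑' n : ℤ, F n ξ)
        = s ξ * Complex.exp (2 * (π:ℂ) * Complex.I * x * ξ) := by
      intro ξ
      rw [hs, hF]
      exact tsum_mul_right
    have hFeq : ∀ n : ℤ, (∫ ξ in Set.Ioo (-W) W, F n ξ)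
        = a n * (_root_.sinc (2*W*x - n) : ℂ) := by
      intro n
      have hstep : ∀ ξ : ℝ, F n ξ
          = c n * Complex.exp (2 * (π:ℂ) * Complex.I * (((x - (n:ℝ)/(2*W) : ℝ)) : ℂ) * ξ) := by
        intro ξ
        simp only [hF, ht]
        rw [mul_assoc, ← Complex.exp_add]
        congr 1
        push_cast
        field_simp
        ring
      rw [setIntegral_congr_fun measurableSet_Ioo (fun ξ _ => hstep ξ), integral_const_mul,
        key_integral hW (x - n/(2*W)),
        show 2*W*(x - n/(2*W)) = 2*W*x - n by field_simp, hc]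
      push_cast
      field_simp
      rw [mul_div_right_comm, mul_div_cancel_right₀ _ (Complex.ofReal_ne_zero.mpr hW.ne')]
    rw [funext hFeq] at H
    have : (∫ ξ in Set.Ioo (-W) W, ∑' n : ℤ, F n ξ)
        = ∫ ξ in Set.Ioo (-W) W, s ξ * Complex.exp (2 * (π:ℂ) * Complex.I * x * ξ) :=
      setIntegral_congr_fun measurableSet_Ioo fun ξ _ => htsum ξ
    rwa [this] at H
  -- Fourier coefficients of g and s agree
  have gcoeff : ∀ m : ℤ,
      (∫ ξ in Set.Ioo (-W) W, g ξ * fourier m (ξ : AddCircle (2*W))) = a m := by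
    intro m
    have := hfIoo ((m : ℝ) / (2*W))
    rw [ha]
    simp only []
    rw [this]
    refine setIntegral_congr_fun measurableSet_Ioo fun ξ _ => ?_
    rw [fourier_coe_apply]
    congr 1
    push_cast
    field_simp
  have scoeff : ∀ m : ℤ,
      (∫ ξ in Set.Ioo (-W) W, s ξ * fourier m (ξ : AddCircle (2*W))) = a m := by
    intro m
    have H := swap ((m : ℝ) / (2*W))
    have harg : ∀ n : ℤ, (2*W*((m : ℝ)/(2*W)) - n) = ((m - n : ℤ) : ℝ) := by
      intro n
      push_cast
      field_simp
    have hfun : (fun n : ℤ => a n * (_root_.sinc (2*W*((m : ℝ)/(2*W)) - n) : ℂ))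
        = fun n : ℤ => if n = m then a m else 0 := by
      funext n
      rw [harg n, sinc_intCast]
      rcases eq_or_ne n m with rfl | hnm
      · simp
      · rw [if_neg (by omega), if_neg hnm]
        simp
    rw [hfun] at H
    have h1 := (hasSum_ite_eq m (a m)).unique H
    rw [h1]
    refine setIntegral_congr_fun measurableSet_Ioo fun ξ _ => ?_
    rw [fourier_coe_apply]
    congr 1
    push_cast
    field_simp
  -- integrability helpers
  have hgOn : IntegrableOn g (Set.Ioo (-W) W) := hg.integrableOn
  have hsOn : IntegrableOn s (Set.Ioo (-W) W) :=
    (hscont.integrableOn_Icc).mono_set Set.Ioo_subset_Icc_self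
  have hmk : Continuous (fun ξ : ℝ => (ξ : AddCircle (2*W))) := continuous_quotient_mk'
  have hgf : ∀ m : ℤ, Integrable (fun ξ : ℝ => g ξ * fourier m (ξ : AddCircle (2*W)))
      (volume.restrict (Set.Ioo (-W) W)) := by
    intro m
    have h1 : Integrable (fun ξ : ℝ => fourier m (ξ : AddCircle (2*W)) * g ξ)
        (volume.restrict (Set.Ioo (-W) W)) :=
      Integrable.bdd_mul hgOn (((fourier m).continuous.comp hmk).aestronglyMeasurable)
        (ae_of_all _ fun ξ => (fourier m).norm_coe_le_norm _)
    simpa [mul_comm] using h1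
  have hsf : ∀ m : ℤ, Integrable (fun ξ : ℝ => s ξ * fourier m (ξ : AddCircle (2*W)))
      (volume.restrict (Set.Ioo (-W) W)) := fun m =>
    ((hscont.mul ((fourier m).continuous.comp hmk)).integrableOn_Icc).mono_set
      Set.Ioo_subset_Icc_self
  have h0 : ∀ m : ℤ,
      (∫ ξ in Set.Ioo (-W) W, (g ξ - s ξ) * fourier m (ξ : AddCircle (2*W))) = 0 := by
    intro m
    have heq : (fun ξ : ℝ => (g ξ - s ξ) * fourier m (ξ : AddCircle (2*W)))
        = fun ξ : ℝ => g ξ * fourier m (ξ : AddCircle (2*W))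
            - s ξ * fourier m (ξ : AddCircle (2*W)) := by
      funext ξ; ring
    rw [heq, integral_sub (hgf m) (hsf m), gcoeff m, scoeff m, sub_self]
  have hvan := key_vanish hW (hgOn.sub hsOn) h0
  intro x
  have hgE : Integrable (fun ξ : ℝ => g ξ * Complex.exp (2 * (π:ℂ) * Complex.I * x * ξ))
      (volume.restrict (Set.Ioo (-W) W)) := by
    have h1 : Integrable
        (fun ξ : ℝ => Complex.exp (2 * (π:ℂ) * Complex.I * x * ξ) * g ξ)
        (volume.restrict (Set.Ioo (-W) W)) :=
      Integrable.bdd_mul hgOn (Continuous.aestronglyMeasurable (by fun_prop))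
        (ae_of_all _ fun ξ => (norm_exp_I_real (2*π*x*ξ) (by push_cast; ring)).le)
    simpa [mul_comm] using h1
  have hsE : Integrable (fun ξ : ℝ => s ξ * Complex.exp (2 * (π:ℂ) * Complex.I * x * ξ))
      (volume.restrict (Set.Ioo (-W) W)) :=
    ((hscont.mul (by fun_prop)).integrableOn_Icc).mono_set Set.Ioo_subset_Icc_self
  have hgs : (∫ ξ in Set.Ioo (-W) W, g ξ * Complex.exp (2 * (π:ℂ) * Complex.I * x * ξ))
      = ∫ ξ in Set.Ioo (-W) W, s ξ * Complex.exp (2 * (π:ℂ) * Complex.I * x * ξ) := by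
    have h2 : (∫ ξ in Set.Ioo (-W) W,
        (g ξ - s ξ) * Complex.exp (2 * (π:ℂ) * Complex.I * x * ξ)) = 0 := hvan x
    have heq : (fun ξ : ℝ => (g ξ - s ξ) * Complex.exp (2 * (π:ℂ) * Complex.I * x * ξ))
        = fun ξ : ℝ => g ξ * Complex.exp (2 * (π:ℂ) * Complex.I * x * ξ)
            - s ξ * Complex.exp (2 * (π:ℂ) * Complex.I * x * ξ) := by
      funext ξ; ring
    rw [heq, integral_sub hgE hsE] at h2
    exact sub_eq_zero.mp h2
  have hhs : HasSum (fun n : ℤ => a n * (_root_.sinc (2*W*x - n) : ℂ)) (f x) := by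
    rw [hfIoo x, hgs]
    exact swap x
  constructor
  · refine Summable.of_nonneg_of_le (fun n => norm_nonneg _) (fun n => ?_) hsum
    rw [norm_mul]
    calc ‖f ((n:ℝ) / (2*W))‖ * ‖((_root_.sinc (2*W*x - n) : ℝ) : ℂ)‖
        ≤ ‖f ((n:ℝ) / (2*W))‖ * 1 := by
          refine mul_le_mul_of_nonneg_left ?_ (norm_nonneg _)
          rw [Complex.norm_real, Real.norm_eq_abs]
          exact abs_sinc_le_one _
      _ = ‖f ((n:ℝ) / (2*W))‖ := mul_one _
  · exact hhs
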